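/- Let m ∈ ℕ, let M be a nonempty closed subset of ℝ^m and let p, q ∈ M. If there exists at least one admissible path from p to q in M, then the energy functional attains its minimum over the class of admissible paths: there is an admissible path (γ*, g*) such that E(γ*) ≤ E(γ) for every admissible path (γ, g) from p to q in M. -/

import Mathlib

open MeasureTheory Set

/-- `(γ, g)` is an admissible path from `p` to `q` in `M ⊆ ℝ^m`:
`γ` is continuous on `[0,1]`, `g ∈ L²([0,1], ℝ^m)`,
`γ t = p + ∫₀ᵗ g` on `[0,1]`, `γ 1 = q` and `γ` stays in `M`. -/
def IsAdmissiblePath {m : ℕ} (M : Set (EuclideanSpace ℝ (Fin m)))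
    (p q : EuclideanSpace ℝ (Fin m))
    (γ g : ℝ → EuclideanSpace ℝ (Fin m)) : Prop :=
  ContinuousOn γ (Icc 0 1) ∧
  MemLp g 2 (volume.restrict (Icc (0:ℝ) 1)) ∧
  (∀ t ∈ Icc (0:ℝ) 1, γ t = p + ∫ s in (0:ℝ)..t, g s) ∧
  γ 1 = q ∧
  ∀ t ∈ Icc (0:ℝ) 1, γ t ∈ M

/-- The energy of an admissible path. -/
noncomputable def pathEnergy {m : ℕ} (g : ℝ → EuclideanSpace ℝ (Fin m)) : ℝ :=
  ∫ s in Icc (0:ℝ) 1, ‖g s‖ ^ 2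

namespace EnergyMinAux

noncomputable section

variable {m : ℕ}

local notation "E" => EuclideanSpace ℝ (Fin m)

/-- Lebesgue measure restricted to `[0,1]`. -/
abbrev muI : Measure ℝ := volume.restrict (Icc (0:ℝ) 1)

instance : IsFiniteMeasure muI := by
  constructor; rw [Measure.restrict_apply_univ]; simp [Real.volume_Icc]

local notation "H" => Lp (E) 2 muI

/-- Indicator of `(0, t]` with value `eᵢ`, as an element of `L²`. -/
def vv (t : ℝ) (i : Fin m) : H :=
  indicatorConstLp 2 measurableSet_Ioc (measure_ne_top muI (Ioc 0 t)) (EuclideanSpace.single i 1)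

/-- The (weak-* continuous) map `φ ↦ (φ (vv t i))ᵢ`. -/
def Fv (t : ℝ) (φ : WeakDual ℝ H) : E := WithLp.toLp 2 (fun i => φ (vv t i))

lemma Fv_cont (t : ℝ) : Continuous (Fv (m := m) t) := by
  have : Continuous fun φ : WeakDual ℝ (H) => (fun i => φ (vv t i) : Fin m → ℝ) :=
    continuous_pi fun i => WeakDual.eval_continuous (vv t i)
  exact (EuclideanSpace.equiv (Fin m) ℝ).symm.continuous.comp this

/-- The canonical embedding of the Hilbert space `L²` into its weak dual. -/
def jj (x : H) : WeakDual ℝ (H) :=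
  StrongDual.toWeakDual (InnerProductSpace.toDual ℝ (H) x)

lemma Fv_j (t : ℝ) (x : H) : Fv t (jj x) = ∫ s in Ioc (0:ℝ) t, x s ∂muI := by
  ext i
  show (InnerProductSpace.toDual ℝ (H) x) (vv t i) = _
  rw [InnerProductSpace.toDual_apply_apply, real_inner_comm]
  rw [vv, L2.inner_indicatorConstLp_eq_inner_setIntegral ℝ measurableSet_Ioc
    (measure_ne_top muI (Ioc 0 t)) (EuclideanSpace.single i 1) x]
  simp [EuclideanSpace.inner_single_left]

lemma norm_jj (x : H) : ‖WeakDual.toStrongDual (jj x)‖ = ‖x‖ := by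
  simpa [jj] using (InnerProductSpace.toDual ℝ (H)).norm_map x

lemma jj_surj (φ : WeakDual ℝ (H)) : jj ((InnerProductSpace.toDual ℝ (H)).symm
    (WeakDual.toStrongDual φ)) = φ := by
  simp [jj]

/-- Interval integrals of a function only depend on its `L²` class. -/
lemma intInt_eq (x : H) (g : ℝ → E) (hg : g =ᵐ[muI] ↑x) {t : ℝ} (ht : t ∈ Icc (0:ℝ) 1) :
    ∫ s in (0:ℝ)..t, g s = ∫ s in Ioc (0:ℝ) t, x s ∂muI := by
  rw [intervalIntegral.integral_of_le ht.1]
  have hsub : Ioc (0:ℝ) t ⊆ Icc (0:ℝ) 1 := fun s hs => ⟨le_of_lt hs.1, hs.2.trans ht.2⟩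
  have hg' : ∀ᵐ s ∂(volume.restrict (Ioc (0:ℝ) t)), g s = x s :=
    ae_restrict_of_ae_restrict_of_subset hsub hg
  have hr : muI.restrict (Ioc (0:ℝ) t) = volume.restrict (Ioc (0:ℝ) t) := by
    rw [Measure.restrict_restrict measurableSet_Ioc, inter_eq_left.mpr hsub]
  rw [show (∫ s in Ioc (0:ℝ) t, x s ∂muI) = ∫ s, x s ∂(muI.restrict (Ioc (0:ℝ) t)) from rfl, hr]
  exact integral_congr_ae hg'

/-- The energy of a path is the square of the `L²` norm of its derivative. -/
lemma energy_eq (x : H) (g : ℝ → E) (hg : g =ᵐ[muI] ↑x) : pathEnergy g = ‖x‖ ^ 2 := by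
  have h1 : pathEnergy g = ∫ s, ‖g s‖ ^ 2 ∂muI := rfl
  have h2 : (inner ℝ x x : ℝ) = ∫ s, inner ℝ (x s) (x s) ∂muI := L2.inner_def x x
  have h3 : (∫ s, ‖g s‖ ^ 2 ∂muI) = ∫ s, (inner ℝ (x s) (x s) : ℝ) ∂muI :=
    integral_congr_ae (hg.mono fun s hs => by
      show ‖g s‖ ^ 2 = inner ℝ (x s) (x s); rw [hs]
      exact (real_inner_self_eq_norm_sq _).symm)
  rw [h1, h3, ← h2, real_inner_self_eq_norm_sq]

end

end EnergyMinAux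

open EnergyMinAux in
/-- The energy functional attains its minimum over admissible paths from `p` to `q` in a
nonempty closed set `M ⊆ ℝ^m`, as soon as one admissible path exists. -/
theorem energy_attains_min {m : ℕ} (M : Set (EuclideanSpace ℝ (Fin m)))
    (hM : M.Nonempty) (hMclosed : IsClosed M)
    (p q : EuclideanSpace ℝ (Fin m)) (hp : p ∈ M) (hq : q ∈ M)
    (hex : ∃ γ g, IsAdmissiblePath M p q γ g) :
    ∃ γ₀ g₀, IsAdmissiblePath M p q γ₀ g₀ ∧
      ∀ γ g, IsAdmissiblePath M p q γ g → pathEnergy g₀ ≤ pathEnergy g := by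
  classical
  set Sen : Set ℝ := {e | ∃ γ g, IsAdmissiblePath M p q γ g ∧ pathEnergy g = e} with hSen
  have hSen_ne : Sen.Nonempty := by
    obtain ⟨γ, g, h⟩ := hex
    exact ⟨pathEnergy g, γ, g, h, rfl⟩
  have hSen_nonneg : ∀ e ∈ Sen, (0:ℝ) ≤ e := by
    rintro e ⟨γ, g, h, rfl⟩
    exact integral_nonneg fun s => sq_nonneg _
  have hbdd : BddBelow Sen := ⟨0, fun e he => hSen_nonneg e he⟩
  set c : ℝ := sInf Sen with hc
  have hc0 : 0 ≤ c := Real.sInf_nonneg hSen_nonneg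
  have hcle : ∀ γ g, IsAdmissiblePath M p q γ g → c ≤ pathEnergy g := fun γ g h =>
    csInf_le hbdd ⟨γ, g, h, rfl⟩
  -- the weak-* closed constraint set
  set Sw : Set (WeakDual ℝ (Lp (EuclideanSpace ℝ (Fin m)) 2 muI)) :=
    (⋂ t ∈ Icc (0:ℝ) 1, (fun φ => p + Fv t φ) ⁻¹' M) ∩ ((fun φ => p + Fv 1 φ) ⁻¹' {q})
    with hSwdef
  have hSw_closed : IsClosed Sw := by
    refine IsClosed.inter (isClosed_biInter fun t _ => ?_) ?_
    · exact hMclosed.preimage (continuous_const.add (Fv_cont t))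
    · exact isClosed_singleton.preimage (continuous_const.add (Fv_cont 1))
  have hmemSw : ∀ φ, φ ∈ Sw ↔
      ((∀ t ∈ Icc (0:ℝ) 1, p + Fv t φ ∈ M) ∧ p + Fv 1 φ = q) := by
    intro φ
    simp [hSwdef, mem_iInter]
  -- the nested compact sets
  set r : ℕ → ℝ := fun n => Real.sqrt (c + 1 / (n + 1)) with hr
  set K : ℕ → Set (WeakDual ℝ (Lp (EuclideanSpace ℝ (Fin m)) 2 muI)) :=
    fun n => Sw ∩ (WeakDual.toStrongDual ⁻¹' Metric.closedBall 0 (r n)) with hK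
  have hKcl : ∀ n, IsClosed (K n) := fun n =>
    hSw_closed.inter (WeakDual.isClosed_closedBall _ _)
  have hKcp : ∀ n, IsCompact (K n) := fun n =>
    (WeakDual.isCompact_closedBall _ _).inter_left hSw_closed
  have hKsub : ∀ n, K (n + 1) ⊆ K n := by
    intro n
    apply inter_subset_inter_right
    apply preimage_mono
    apply Metric.closedBall_subset_closedBall
    apply Real.sqrt_le_sqrt
    have h1 : (0:ℝ) < (n:ℝ) + 1 := by positivity
    have h2 : (0:ℝ) < (n:ℝ) + 1 + 1 := by positivity
    have : (1:ℝ) / ((n:ℝ) + 1 + 1) ≤ 1 / ((n:ℝ) + 1) := by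
      apply div_le_div_of_nonneg_left one_pos.le h1; linarith
    push_cast
    linarith
  have hKne : ∀ n, (K n).Nonempty := by
    intro n
    have hεpos : (0:ℝ) < 1 / (n + 1) := by positivity
    obtain ⟨e, ⟨γ, g, hadm, he⟩, hlt⟩ := Real.lt_sInf_add_pos hSen_ne hεpos
    obtain ⟨hγcont, hgL2, hγeq, hγ1, hγM⟩ := hadm
    set x : Lp (EuclideanSpace ℝ (Fin m)) 2 muI := hgL2.toLp g with hx
    have hgx : g =ᵐ[muI] ↑x := (MemLp.coeFn_toLp hgL2).symm
    refine ⟨jj x, (hmemSw _).mpr ⟨?_, ?_⟩, ?_⟩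
    · intro t ht
      rw [Fv_j, ← intInt_eq x g hgx ht, ← hγeq t ht]
      exact hγM t ht
    · have h1 : (1:ℝ) ∈ Icc (0:ℝ) 1 := ⟨zero_le_one, le_refl 1⟩
      rw [Fv_j, ← intInt_eq x g hgx h1, ← hγeq 1 h1, hγ1]
    · have hxn : ‖x‖ ≤ r n := by
        have hsq : ‖x‖ ^ 2 ≤ c + 1 / (n + 1) := by
          rw [← energy_eq x g hgx]
          rw [show pathEnergy g = e from he] at *
          exact hlt.le
        calc ‖x‖ = Real.sqrt (‖x‖ ^ 2) := (Real.sqrt_sq (norm_nonneg x)).symm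
          _ ≤ r n := Real.sqrt_le_sqrt hsq
      rw [mem_preimage, Metric.mem_closedBall, dist_zero_right, norm_jj]
      exact hxn
  -- extract a point in the intersection
  obtain ⟨φ₀, hφ₀⟩ := IsCompact.nonempty_iInter_of_sequence_nonempty_isCompact_isClosed
    K hKsub hKne (hKcp 0) hKcl
  set x₀ : Lp (EuclideanSpace ℝ (Fin m)) 2 muI :=
    (InnerProductSpace.toDual ℝ _).symm (WeakDual.toStrongDual φ₀) with hx₀
  have hjx₀ : jj x₀ = φ₀ := jj_surj φ₀
  have hφ₀K : ∀ n, φ₀ ∈ K n := fun n => mem_iInter.mp hφ₀ n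
  have hφ₀Sw : ((∀ t ∈ Icc (0:ℝ) 1, p + Fv t φ₀ ∈ M) ∧ p + Fv 1 φ₀ = q) :=
    (hmemSw _).mp (hφ₀K 0).1
  have hx₀n : ∀ n : ℕ, ‖x₀‖ ≤ r n := by
    intro n
    have h2 := (hφ₀K n).2
    rw [← hjx₀, mem_preimage, Metric.mem_closedBall, dist_zero_right, norm_jj] at h2
    exact h2
  have hx₀sq : ‖x₀‖ ^ 2 ≤ c := by
    by_contra hcon
    push_neg at hcon
    obtain ⟨n, hn⟩ := exists_nat_one_div_lt (sub_pos.mpr hcon)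
    have h1 : ‖x₀‖ ^ 2 ≤ c + 1 / (n + 1) := by
      have h2 : (0:ℝ) ≤ c + 1 / (n + 1) := by positivity
      calc ‖x₀‖ ^ 2 ≤ (r n) ^ 2 := by
            apply pow_le_pow_left₀ (norm_nonneg _) (hx₀n n)
        _ = c + 1 / (n + 1) := Real.sq_sqrt h2
    push_cast at hn h1
    linarith
  -- the minimizing path
  set g₀ : ℝ → EuclideanSpace ℝ (Fin m) := ↑x₀ with hg₀
  have hg₀ae : g₀ =ᵐ[muI] ↑x₀ := Filter.EventuallyEq.refl _ _
  set γ₀ : ℝ → EuclideanSpace ℝ (Fin m) := fun t => p + ∫ s in (0:ℝ)..t, g₀ s with hγ₀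
  have hγ₀val : ∀ t ∈ Icc (0:ℝ) 1, γ₀ t = p + Fv t φ₀ := by
    intro t ht
    rw [← hjx₀, Fv_j, ← intInt_eq x₀ g₀ hg₀ae ht]
  have hint : IntegrableOn g₀ (Icc (0:ℝ) 1) volume :=
    MemLp.integrable one_le_two (Lp.memLp x₀)
  refine ⟨γ₀, g₀, ⟨?_, Lp.memLp x₀, fun t _ => rfl, ?_, ?_⟩, ?_⟩
  · -- continuity
    have hcont : ContinuousOn (fun t => ∫ s in Ioc (0:ℝ) t, g₀ s) (Icc (0:ℝ) 1) :=
      intervalIntegral.continuousOn_primitive hint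
    have : ContinuousOn (fun t => p + ∫ s in Ioc (0:ℝ) t, g₀ s) (Icc (0:ℝ) 1) :=
      continuousOn_const.add hcont
    refine this.congr fun t ht => ?_
    show p + ∫ s in (0:ℝ)..t, g₀ s = _
    rw [intervalIntegral.integral_of_le ht.1]
  · -- endpoint
    have h1 : (1:ℝ) ∈ Icc (0:ℝ) 1 := ⟨zero_le_one, le_refl 1⟩
    rw [show γ₀ 1 = p + Fv 1 φ₀ from hγ₀val 1 h1]
    exact hφ₀Sw.2
  · -- stays in M
    intro t ht
    rw [hγ₀val t ht]
    exact hφ₀Sw.1 t ht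
  · -- minimality
    intro γ g hadm
    calc pathEnergy g₀ = ‖x₀‖ ^ 2 := energy_eq x₀ g₀ hg₀ae
      _ ≤ c := hx₀sq
      _ ≤ pathEnergy g := hcle γ g hadm
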